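/- (Inverse weighted Fermat–Torricelli problem for tetrahedra.) Let A_1A_2A_3A_4 be a non-degenerate tetrahedron in ℝ³, let A_0 be a point in its interior, and let c > 0. Then there exists a unique quadruple of positive weights (B̄_1, B̄_2, B̄_3, B̄_4) with B̄_1 + B̄_2 + B̄_3 + B̄_4 = c such that A_0 minimizes X ↦ Σ_{i=1}^4 B̄_i‖X − A_i‖, and it is given by B̄_i = c / (1 + s_{i,jk}/s_{l,jk} + s_{i,jl}/s_{k,jl} + s_{i,kl}/s_{j,kl}) for {i,j,k,l} = {1,2,3,4}, where u_r = u(A_0, A_r), n_{pq} is a unit normal to span{u_p, u_q}, and s_{r,pq} := |⟨u_r, n_{pq}⟩|. -/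

import Mathlib

open RealInnerProductSpace

set_option maxHeartbeats 1000000 in
/-- Inverse weighted Fermat–Torricelli problem for tetrahedra: for an interior point
`A₀` of a non-degenerate tetrahedron and `c > 0` there is a unique quadruple of
positive weights summing to `c` for which `A₀` is the weighted Fermat–Torricelli
point, and it is given by the explicit formula in terms of the quantities
`s_{r,pq} = |⟪u r, n p q⟫|`. Indices are shifted: `A 0, …, A 3` are `A₁, …, A₄`. -/
theorem inverse_weighted_fermat_torricelli_tetrahedron
    (A : Fin 4 → EuclideanSpace ℝ (Fin 3))
    (hA : AffineIndependent ℝ A)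
    (A₀ : EuclideanSpace ℝ (Fin 3))
    (hA₀ : A₀ ∈ interior (convexHull ℝ (Set.range A)))
    (c : ℝ) (hc : 0 < c)
    (u : Fin 4 → EuclideanSpace ℝ (Fin 3))
    (hu : ∀ i, u i = ‖A i - A₀‖⁻¹ • (A i - A₀))
    (n : Fin 4 → Fin 4 → EuclideanSpace ℝ (Fin 3))
    (hn : ∀ p q, ‖n p q‖ = 1 ∧ ⟪u p, n p q⟫ = 0 ∧ ⟪u q, n p q⟫ = 0) :
    (∃! B : Fin 4 → ℝ, (∀ i, 0 < B i) ∧ (∑ i, B i = c) ∧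
        ∀ X : EuclideanSpace ℝ (Fin 3),
          ∑ i, B i * ‖A₀ - A i‖ ≤ ∑ i, B i * ‖X - A i‖) ∧
    ∀ B : Fin 4 → ℝ, (∀ i, 0 < B i) → (∑ i, B i = c) →
      (∀ X : EuclideanSpace ℝ (Fin 3),
        ∑ i, B i * ‖A₀ - A i‖ ≤ ∑ i, B i * ‖X - A i‖) →
      ∀ i j k l : Fin 4,
        i ≠ j → i ≠ k → i ≠ l → j ≠ k → j ≠ l → k ≠ l →
        B i = c / (1 + |⟪u i, n j k⟫| / |⟪u l, n j k⟫|
          + |⟪u i, n j l⟫| / |⟪u k, n j l⟫|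
          + |⟪u i, n k l⟫| / |⟪u j, n k l⟫|) := by
  classical
  -- Step A: affine basis and barycentric coordinates of A₀
  have htop : affineSpan ℝ (Set.range A) = ⊤ := by
    rw [hA.affineSpan_eq_top_iff_card_eq_finrank_add_one]
    simp [finrank_euclideanSpace]
  let b : AffineBasis (Fin 4) ℝ (EuclideanSpace ℝ (Fin 3)) := ⟨A, hA, htop⟩
  set t : Fin 4 → ℝ := fun i => b.coord i A₀ with ht
  have htpos : ∀ i, 0 < t i := by
    have h := b.interior_convexHull
    have h2 : A₀ ∈ {x | ∀ i, 0 < b.coord i x} := by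
      rw [← h]; exact hA₀
    exact h2
  have htsum : ∑ i, t i = 1 := b.sum_coord_apply_eq_one A₀
  have hA₀eq : ∑ i, t i • A i = A₀ := b.linear_combination_coord_eq_self A₀
  -- Step B: distances are positive
  set r : Fin 4 → ℝ := fun i => ‖A i - A₀‖ with hr
  have hAne : ∀ i, A i ≠ A₀ := by
    intro i hEq
    obtain ⟨j, hj⟩ : ∃ j : Fin 4, j ≠ i := exists_ne i
    have h0 : b.coord j (A i) = 0 := by
      have h := b.coord_apply j i
      have h' : b.coord j (b i) = 0 := by simpa [if_neg hj] using h
      exact h'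
    have := htpos j
    rw [ht] at this
    simp only at this
    rw [← hEq] at this
    rw [h0] at this
    exact lt_irrefl 0 this
  have hrpos : ∀ i, 0 < r i := fun i => by
    simp only [hr]
    exact norm_pos_iff.mpr (sub_ne_zero.mpr (hAne i))
  have hru : ∀ i, r i • u i = A i - A₀ := fun i => by
    rw [hu i, smul_smul, mul_inv_cancel₀ (hrpos i).ne', one_smul]
  have hunorm : ∀ i, ‖u i‖ = 1 := fun i => by
    rw [hu i, norm_smul, norm_inv, norm_norm]
    exact inv_mul_cancel₀ (hrpos i).ne'
  have hinner_uv : ∀ i, ⟪u i, A i - A₀⟫ = r i := fun i => by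
    rw [← hru i, real_inner_smul_right, real_inner_self_eq_norm_sq, hunorm i]
    ring
  -- Step D: a vector orthogonal to all u i vanishes
  have hperp : ∀ m : EuclideanSpace ℝ (Fin 3), (∀ i, ⟪u i, m⟫ = 0) → m = 0 := by
    intro m hm
    have hvm : ∀ i, ⟪A i - A₀, m⟫ = 0 := fun i => by
      rw [← hru i, real_inner_smul_left, hm i, mul_zero]
    have hmem : A₀ + m ∈ affineSpan ℝ (Set.range A) := by
      rw [htop]; exact AffineSubspace.mem_top ℝ _ _
    obtain ⟨w, hw, hwe⟩ := eq_affineCombination_of_mem_affineSpan_of_fintype hmem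
    have h1 : A₀ + m = ∑ i, w i • A i := by
      rw [hwe, Finset.univ.affineCombination_eq_linear_combination _ _ hw]
    have hme : m = ∑ i, w i • (A i - A₀) := by
      have h2 : ∑ i, w i • (A i - A₀) = ∑ i, w i • A i - A₀ := by
        simp only [smul_sub]
        rw [Finset.sum_sub_distrib, ← Finset.sum_smul, hw, one_smul]
      rw [h2, ← h1]; abel
    have h3 : ⟪m, m⟫ = 0 := by
      nth_rewrite 1 [hme]
      rw [sum_inner]
      simp only [real_inner_smul_left, hvm, mul_zero, Finset.sum_const_zero]
    exact inner_self_eq_zero.mp h3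
  -- Step E1: if ∑ B i • u i = 0 with B nonneg then A₀ is a minimizer
  have hmin_of : ∀ B : Fin 4 → ℝ, (∀ i, 0 ≤ B i) → (∑ i, B i • u i = 0) →
      ∀ X : EuclideanSpace ℝ (Fin 3),
        ∑ i, B i * ‖A₀ - A i‖ ≤ ∑ i, B i * ‖X - A i‖ := by
    intro B hB0 hS X
    have h1 : ∀ i, r i - ⟪u i, X - A₀⟫ ≤ ‖X - A i‖ := by
      intro i
      have h2 : ⟪u i, A i - X⟫ ≤ ‖X - A i‖ := by
        calc ⟪u i, A i - X⟫ ≤ ‖u i‖ * ‖A i - X‖ := real_inner_le_norm _ _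
        _ = ‖X - A i‖ := by rw [hunorm, one_mul, norm_sub_rev]
      have h3 : ⟪u i, A i - X⟫ = r i - ⟪u i, X - A₀⟫ := by
        rw [← hinner_uv i, ← inner_sub_right]
        congr 1
        abel
      linarith [h3 ▸ h2]
    calc ∑ i, B i * ‖A₀ - A i‖ = ∑ i, B i * r i := by
          refine Finset.sum_congr rfl fun i _ => ?_
          rw [norm_sub_rev]
    _ = ∑ i, B i * r i - ⟪∑ i, B i • u i, X - A₀⟫ := by
          rw [hS, inner_zero_left, sub_zero]
    _ = ∑ i, (B i * r i - B i * ⟪u i, X - A₀⟫) := by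
          rw [sum_inner, Finset.sum_sub_distrib]
          simp only [real_inner_smul_left]
    _ ≤ ∑ i, B i * ‖X - A i‖ := by
          refine Finset.sum_le_sum fun i _ => ?_
          have := h1 i
          nlinarith [hB0 i]
  -- Step E2: if A₀ is a minimizer with positive weights then ∑ B i • u i = 0
  have hS_of_min : ∀ B : Fin 4 → ℝ, (∀ i, 0 < B i) →
      (∀ X : EuclideanSpace ℝ (Fin 3),
        ∑ i, B i * ‖A₀ - A i‖ ≤ ∑ i, B i * ‖X - A i‖) →
      ∑ i, B i • u i = 0 := by
    intro B hBpos hmin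
    by_contra hS
    set S : EuclideanSpace ℝ (Fin 3) := ∑ i, B i • u i with hSdef
    have hSnorm : 0 < ‖S‖ := norm_pos_iff.mpr hS
    set K : ℝ := ∑ i, B i * ‖S‖ ^ 2 / (2 * r i) with hK
    have hKpos : 0 < K := by
      refine Finset.sum_pos (fun i _ => ?_) ⟨0, Finset.mem_univ 0⟩
      exact div_pos (mul_pos (hBpos i) (pow_pos hSnorm 2)) (by have := hrpos i; linarith)
    obtain ⟨i₀, -, hi₀⟩ := Finset.exists_min_image Finset.univ r ⟨0, Finset.mem_univ 0⟩
    set ε : ℝ := min (‖S‖ ^ 2 / (2 * K)) (r i₀ / ‖S‖) with hε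
    have hεpos : 0 < ε := lt_min (div_pos (pow_pos hSnorm 2) (by linarith)) (div_pos (hrpos i₀) hSnorm)
    have hεcond : ∀ i, ε * ‖S‖ ≤ r i := by
      intro i
      have h1 : ε ≤ r i₀ / ‖S‖ := min_le_right _ _
      have h2 : r i₀ ≤ r i := hi₀ i (Finset.mem_univ i)
      calc ε * ‖S‖ ≤ (r i₀ / ‖S‖) * ‖S‖ := by nlinarith
      _ = r i₀ := div_mul_cancel₀ _ hSnorm.ne'
      _ ≤ r i := h2
    have hbound : ∀ i, ‖(A₀ + ε • S) - A i‖ ≤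
        r i - ε * ⟪u i, S⟫ + ε ^ 2 * ‖S‖ ^ 2 / (2 * r i) := by
      intro i
      set a : ℝ := ⟪u i, S⟫ with ha
      have haS : |a| ≤ ‖S‖ := by
        calc |a| ≤ ‖u i‖ * ‖S‖ := abs_real_inner_le_norm _ _
        _ = ‖S‖ := by rw [hunorm, one_mul]
      have hL2 : ‖(A₀ + ε • S) - A i‖ ^ 2 =
          r i ^ 2 - 2 * ε * r i * a + ε ^ 2 * ‖S‖ ^ 2 := by
        have hrw : (A₀ + ε • S) - A i = ε • S - (A i - A₀) := by abel
        rw [hrw, norm_sub_sq_real, ← hru i, real_inner_smul_left, real_inner_smul_right,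
          norm_smul, norm_smul]
        rw [real_inner_comm, ← ha, hunorm, Real.norm_eq_abs, Real.norm_eq_abs,
          abs_of_pos hεpos, abs_of_pos (hrpos i)]
        ring
      have hri := hrpos i
      have hc0 : 0 ≤ r i - ε * a + ε ^ 2 * ‖S‖ ^ 2 / (2 * r i) := by
        have h1 : ε * a ≤ ε * ‖S‖ := by nlinarith [le_of_abs_le haS]
        have h2 := hεcond i
        have h3 : 0 ≤ ε ^ 2 * ‖S‖ ^ 2 / (2 * r i) := by positivity
        linarith
      have hsq : ‖(A₀ + ε • S) - A i‖ ^ 2 ≤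
          (r i - ε * a + ε ^ 2 * ‖S‖ ^ 2 / (2 * r i)) ^ 2 := by
        rw [hL2]
        have key : (r i - ε * a + ε ^ 2 * ‖S‖ ^ 2 / (2 * r i)) ^ 2 =
            (r i ^ 2 - 2 * ε * r i * a + ε ^ 2 * ‖S‖ ^ 2) +
            (ε * a - ε ^ 2 * ‖S‖ ^ 2 / (2 * r i)) ^ 2 := by
          field_simp
          ring
        rw [key]
        nlinarith [sq_nonneg (ε * a - ε ^ 2 * ‖S‖ ^ 2 / (2 * r i))]
      nlinarith [norm_nonneg ((A₀ + ε • S) - A i), hc0, hsq]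
    have hmain := hmin (A₀ + ε • S)
    have hA₀sum : ∑ i, B i * ‖A₀ - A i‖ = ∑ i, B i * r i := by
      refine Finset.sum_congr rfl fun i _ => ?_
      rw [norm_sub_rev]
    have hsum_le : ∑ i, B i * ‖(A₀ + ε • S) - A i‖ ≤
        ∑ i, B i * r i - ε * ‖S‖ ^ 2 + ε ^ 2 * K := by
      have h1 : ∑ i, B i * ‖(A₀ + ε • S) - A i‖ ≤
          ∑ i, (B i * r i - ε * (B i * ⟪u i, S⟫) + ε ^ 2 * (B i * ‖S‖ ^ 2 / (2 * r i))) := by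
        refine Finset.sum_le_sum fun i _ => ?_
        have := hbound i
        have hB := (hBpos i).le
        have hri := hrpos i
        have hexp : B i * (r i - ε * ⟪u i, S⟫ + ε ^ 2 * ‖S‖ ^ 2 / (2 * r i)) =
            B i * r i - ε * (B i * ⟪u i, S⟫) + ε ^ 2 * (B i * ‖S‖ ^ 2 / (2 * r i)) := by
          field_simp
        calc B i * ‖(A₀ + ε • S) - A i‖ ≤
            B i * (r i - ε * ⟪u i, S⟫ + ε ^ 2 * ‖S‖ ^ 2 / (2 * r i)) :=
              mul_le_mul_of_nonneg_left this hB
        _ = _ := hexp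
      have h2 : ∑ i, B i * ⟪u i, S⟫ = ‖S‖ ^ 2 := by
        have : ⟪S, S⟫ = ∑ i, B i * ⟪u i, S⟫ := by
          nth_rewrite 1 [hSdef]
          rw [sum_inner]
          simp only [real_inner_smul_left]
        rw [← this, real_inner_self_eq_norm_sq]
      calc ∑ i, B i * ‖(A₀ + ε • S) - A i‖ ≤
          ∑ i, (B i * r i - ε * (B i * ⟪u i, S⟫) + ε ^ 2 * (B i * ‖S‖ ^ 2 / (2 * r i))) := h1
      _ = ∑ i, B i * r i - ε * ∑ i, B i * ⟪u i, S⟫ + ε ^ 2 * ∑ i, B i * ‖S‖ ^ 2 / (2 * r i) := by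
          rw [Finset.sum_add_distrib, Finset.sum_sub_distrib, Finset.mul_sum, Finset.mul_sum]
      _ = ∑ i, B i * r i - ε * ‖S‖ ^ 2 + ε ^ 2 * K := by rw [h2, hK]
    have hfin : ε * ‖S‖ ^ 2 ≤ ε ^ 2 * K := by
      rw [hA₀sum] at hmain
      linarith [hmain.trans hsum_le]
    have h2 : ‖S‖ ^ 2 ≤ ε * K := by nlinarith
    have h3 : ε ≤ ‖S‖ ^ 2 / (2 * K) := min_le_left _ _
    have h4 : ε * (2 * K) ≤ ‖S‖ ^ 2 := (le_div_iff₀ (by linarith)).mp h3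
    linarith [pow_pos hSnorm 2]
  -- Step F: uniqueness of the weights (kernel is trivial)
  have hker : ∀ d : Fin 4 → ℝ, (∑ i, d i = 0) → (∑ i, d i • u i = 0) → ∀ i, d i = 0 := by
    intro d hd0 hdu
    set e : Fin 4 → ℝ := fun i => d i * (r i)⁻¹ with he
    have hdu' : ∑ i, e i • (A i - A₀) = 0 := by
      rw [← hdu]
      refine Finset.sum_congr rfl fun i _ => ?_
      rw [← hru i, smul_smul, he]
      simp only
      rw [mul_assoc, inv_mul_cancel₀ (hrpos i).ne', mul_one]
    set σ : ℝ := ∑ i, e i with hσ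
    have hw0 : ∑ i, (e i - σ * t i) = 0 := by
      rw [Finset.sum_sub_distrib, ← Finset.mul_sum, htsum, mul_one, ← hσ, sub_self]
    have h1 : ∑ i, e i • A i = σ • A₀ := by
      have h2 : ∑ i, e i • (A i - A₀) = ∑ i, e i • A i - σ • A₀ := by
        simp only [smul_sub]
        rw [Finset.sum_sub_distrib, ← Finset.sum_smul, ← hσ]
      rw [h2] at hdu'
      exact sub_eq_zero.mp hdu'
    have hwA : ∑ i, (e i - σ * t i) • A i = 0 := by
      have h3 : ∑ i, (e i - σ * t i) • A i = ∑ i, e i • A i - σ • ∑ i, t i • A i := by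
        rw [Finset.smul_sum, ← Finset.sum_sub_distrib]
        refine Finset.sum_congr rfl fun i _ => ?_
        rw [sub_smul, smul_smul]
      rw [h3, h1, hA₀eq, sub_self]
    have heq := affineIndependent_iff.mp hA Finset.univ _ hw0 hwA
    have hee : ∀ i, e i = σ * t i := fun i => by
      have := heq i (Finset.mem_univ i)
      linarith
    have hdi : ∀ i, d i = σ * (t i * r i) := fun i => by
      have h4 := hee i
      rw [he] at h4
      simp only at h4
      have : d i * (r i)⁻¹ * r i = σ * t i * r i := by rw [h4]
      rw [mul_assoc, inv_mul_cancel₀ (hrpos i).ne', mul_one] at this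
      rw [this]; ring
    have hTpos : 0 < ∑ i, t i * r i :=
      Finset.sum_pos (fun i _ => mul_pos (htpos i) (hrpos i)) ⟨0, Finset.mem_univ 0⟩
    have hσ0 : σ = 0 := by
      have h5 : ∑ i, d i = σ * ∑ i, t i * r i := by
        rw [Finset.mul_sum]
        exact Finset.sum_congr rfl fun i _ => hdi i
      rw [hd0] at h5
      have := h5.symm
      rcases mul_eq_zero.mp this with h | h
      · exact h
      · exact absurd h hTpos.ne'
    intro i
    rw [hdi i, hσ0, zero_mul]
  -- Step G: the explicit weights
  set T : ℝ := ∑ i, t i * r i with hT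
  have hTpos : 0 < T :=
    Finset.sum_pos (fun i _ => mul_pos (htpos i) (hrpos i)) ⟨0, Finset.mem_univ 0⟩
  set Bs : Fin 4 → ℝ := fun i => c * (t i * r i) / T with hBs
  have hBspos : ∀ i, 0 < Bs i := fun i => by
    simp only [hBs]
    exact div_pos (mul_pos hc (mul_pos (htpos i) (hrpos i))) hTpos
  have hBssum : ∑ i, Bs i = c := by
    simp only [hBs]
    rw [← Finset.sum_div, ← Finset.mul_sum, ← hT, mul_div_assoc, div_self hTpos.ne', mul_one]
  have hBsS : ∑ i, Bs i • u i = 0 := by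
    have h1 : ∑ i, Bs i • u i = (c / T) • ∑ i, t i • (A i - A₀) := by
      rw [Finset.smul_sum]
      refine Finset.sum_congr rfl fun i _ => ?_
      rw [← hru i, smul_smul, smul_smul, hBs]
      simp only
      congr 1
      field_simp
    have h2 : ∑ i, t i • (A i - A₀) = 0 := by
      simp only [smul_sub]
      rw [Finset.sum_sub_distrib, ← Finset.sum_smul, htsum, one_smul, hA₀eq, sub_self]
    rw [h1, h2, smul_zero]
  -- assemble
  constructor
  · refine ⟨Bs, ⟨hBspos, hBssum, hmin_of Bs (fun i => (hBspos i).le) hBsS⟩, ?_⟩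
    rintro B' ⟨hB'pos, hB'sum, hB'min⟩
    have hB'S := hS_of_min B' hB'pos hB'min
    funext i
    have hd := hker (fun m => B' m - Bs m)
      (by rw [Finset.sum_sub_distrib, hB'sum, hBssum, sub_self])
      (by
        have : ∑ m, (B' m - Bs m) • u m = ∑ m, B' m • u m - ∑ m, Bs m • u m := by
          rw [← Finset.sum_sub_distrib]
          exact Finset.sum_congr rfl fun m _ => by rw [sub_smul]
        rw [this, hB'S, hBsS, sub_self]) i
    exact sub_eq_zero.mp hd
  · intro B hBpos hBsum hBmin i j k l hij hik hil hjk hjl hkl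
    have hS := hS_of_min B hBpos hBmin
    have huniv : (Finset.univ : Finset (Fin 4)) = {i, j, k, l} := by
      symm
      apply Finset.eq_univ_of_card
      rw [Finset.card_insert_of_notMem (by simp [hij, hik, hil]),
        Finset.card_insert_of_notMem (by simp [hjk, hjl]),
        Finset.card_insert_of_notMem (by simp [hkl]), Finset.card_singleton]
      rfl
    have hsum4 : B i + (B j + (B k + B l)) = c := by
      rw [← hBsum, huniv, Finset.sum_insert (by simp [hij, hik, hil]),
        Finset.sum_insert (by simp [hjk, hjl]), Finset.sum_insert (by simp [hkl]),
        Finset.sum_singleton]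
    have hratio : ∀ p q x y : Fin 4, x ≠ y → x ≠ p → x ≠ q → y ≠ p → y ≠ q → p ≠ q →
        |⟪u x, n p q⟫| / |⟪u y, n p q⟫| = B y / B x := by
      intro p q x y h1 h2 h3 h4 h5 h6
      have hzp := (hn p q).2.1
      have hzq := (hn p q).2.2
      have hcov : (Finset.univ : Finset (Fin 4)) = {x, y, p, q} := by
        symm
        apply Finset.eq_univ_of_card
        rw [Finset.card_insert_of_notMem (by simp [h1, h2, h3]),
          Finset.card_insert_of_notMem (by simp [h4, h5]),
          Finset.card_insert_of_notMem (by simp [h6]), Finset.card_singleton]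
        rfl
      have h0 : ⟪∑ m, B m • u m, n p q⟫ = 0 := by rw [hS, inner_zero_left]
      rw [sum_inner, hcov, Finset.sum_insert (by simp [h1, h2, h3]),
        Finset.sum_insert (by simp [h4, h5]), Finset.sum_insert (by simp [h6]),
        Finset.sum_singleton] at h0
      simp only [real_inner_smul_left, hzp, hzq, mul_zero, add_zero] at h0
      have hyne : ⟪u y, n p q⟫ ≠ 0 := by
        intro hy0
        have hx0 : ⟪u x, n p q⟫ = 0 := by
          rw [hy0, mul_zero, add_zero] at h0
          rcases mul_eq_zero.mp h0 with h | h
          · exact absurd h (hBpos x).ne'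
          · exact h
        have hnz : n p q = 0 := by
          refine hperp _ fun m => ?_
          have hm : m = x ∨ m = y ∨ m = p ∨ m = q := by
            have := hcov ▸ Finset.mem_univ m
            simpa [Finset.mem_insert] using this
          rcases hm with rfl | rfl | rfl | rfl
          · exact hx0
          · exact hy0
          · exact hzp
          · exact hzq
        have := (hn p q).1
        rw [hnz, norm_zero] at this
        exact one_ne_zero this.symm
      have habs : B x * |⟪u x, n p q⟫| = B y * |⟪u y, n p q⟫| := by
        have hneg : B x * ⟪u x, n p q⟫ = -(B y * ⟪u y, n p q⟫) := by linarith
        calc B x * |⟪u x, n p q⟫| = |B x * ⟪u x, n p q⟫| := by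
              rw [abs_mul, abs_of_pos (hBpos x)]
        _ = |B y * ⟪u y, n p q⟫| := by rw [hneg, abs_neg]
        _ = B y * |⟪u y, n p q⟫| := by rw [abs_mul, abs_of_pos (hBpos y)]
      have hyabs : |⟪u y, n p q⟫| ≠ 0 := abs_ne_zero.mpr hyne
      rw [div_eq_div_iff hyabs (hBpos x).ne']
      linear_combination habs
    have e1 := hratio j k i l hil hij hik hjl.symm hkl.symm hjk
    have e2 := hratio j l i k hik hij hil hjk.symm hkl hjl
    have e3 := hratio k l i j hij hik hil hjk hjl hkl
    rw [e1, e2, e3]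
    have hBi := hBpos i
    have hden : 1 + B l / B i + B k / B i + B j / B i = c / B i := by
      field_simp
      linarith
    rw [hden]
    rw [div_div_eq_mul_div, mul_comm, mul_div_assoc, div_self hc.ne', mul_one]
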